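/- arXiv:1311.4425 — 2 statements merged into one kernel-verified Lean document; each statement's English description precedes it below -/
import Mathlib

section
/- (Finiteness of markings; core of the Finiteness Theorem.) For every k ≥ 1 and every d ≥ 0 there is a finite subset F ⊆ Mark d such that for every topology G, every k-tuple ḡ of pairwise distinct vertices of G, and every vertex v of G, the marking μ_d(v) (computed in G with respect to ḡ) belongs to F. -/
/-! Markings of topologies with a marked k-tuple, following the paper's
`d`-contraction construction. -/

noncomputable def dst {α : Type} (l : List α) : List α :=
  @List.destutter α (· ≠ ·) (fun _ _ => Classical.dec _) l

section DstFacts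
variable {α : Type} {a b : α} {l : List α}

lemma dst_cons_cons_ne (h : a ≠ b) (l : List α) : dst (a :: b :: l) = a :: dst (b :: l) := by
  unfold dst
  rw [List.destutter_cons_cons, if_pos h, List.destutter_cons']

lemma dst_cons_cons_eq (h : a = b) (l : List α) : dst (a :: b :: l) = dst (b :: l) := by
  subst h
  unfold dst
  rw [List.destutter_cons_cons, if_neg (by simp), List.destutter_cons']

lemma dst_head (a : α) (l : List α) : ∃ t, dst (a :: l) = a :: t := by
  induction l generalizing a with
  | nil => exact ⟨[], rfl⟩
  | cons b t ih =>
    by_cases h : a = b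
    · obtain ⟨u, hu⟩ := ih b
      subst h
      exact ⟨u, by rw [dst_cons_cons_eq rfl, hu]⟩
    · exact ⟨dst (b :: t), dst_cons_cons_ne h t⟩

lemma mem_of_mem_dst {x : α} (h : x ∈ dst l) : x ∈ l :=
  (@List.destutter_sublist α (· ≠ ·) (fun _ _ => Classical.dec _) l).subset h

open Classical in
noncomputable def chg : List α → ℕ
  | [] => 0
  | [_] => 0
  | a :: b :: l => (if a = b then 0 else 1) + chg (b :: l)

lemma chg_cons_cons_eq (h : a = b) (l : List α) : chg (a :: b :: l) = chg (b :: l) := by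
  simp [chg, h]

lemma chg_cons_cons_ne (h : a ≠ b) (l : List α) : chg (a :: b :: l) = chg (b :: l) + 1 := by
  simp [chg, h, Nat.add_comm]

lemma chg_cons_le (a b : α) (l : List α) : chg (a :: b :: l) ≤ chg (b :: l) + 1 := by
  by_cases h : a = b
  · rw [chg_cons_cons_eq h]; omega
  · rw [chg_cons_cons_ne h]

lemma length_dst (a : α) (l : List α) : (dst (a :: l)).length = chg (a :: l) + 1 := by
  induction l generalizing a with
  | nil => rfl
  | cons b t ih =>
    by_cases h : a = b
    · rw [dst_cons_cons_eq h, chg_cons_cons_eq h]; exact ih b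
    · rw [dst_cons_cons_ne h, chg_cons_cons_ne h, List.length_cons, ih b]

lemma dst_len_le_two (a : α) : ∀ l : List α, (∀ x ∈ l.dropLast, x = a) → (dst l).length ≤ 2 := by
  intro l
  induction l with
  | nil => intro _; simp [dst]
  | cons x l ih =>
    cases l with
    | nil => intro _; simp [dst]
    | cons y t =>
      intro h
      by_cases hxy : x = y
      · rw [dst_cons_cons_eq hxy]
        exact ih fun z hz => h z (by rw [List.dropLast_cons₂]; exact List.mem_cons_of_mem _ hz)
      · have hx : x = a := h x (by rw [List.dropLast_cons₂]; exact List.mem_cons_self)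
        cases t with
        | nil => rw [dst_cons_cons_ne hxy]; simp [dst]
        | cons z t' =>
          have hy : y = a := h y (by
            rw [List.dropLast_cons₂, List.dropLast_cons₂]
            exact List.mem_cons_of_mem _ (List.mem_cons_self))
          exact absurd (hx.trans hy.symm) hxy

lemma comb {β γ : Type} (f : α → β) (g : α → γ) (m : γ → ℕ) (N : ℕ) :
    ∀ (t : List α) (x : α),
      (∀ v ∈ x :: t, m (g v) ≤ N) →
      List.Chain' (fun u w => f u = f w → g u = g w ∨ m (g w) < m (g u)) (x :: t) →
      chg ((x :: t).map g) ≤ chg ((x :: t).map f) * (N + 1) + m (g x) := by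
  intro t
  induction t with
  | nil => intro x _ _; simp [chg]
  | cons y t ih =>
    intro x hm hc
    obtain ⟨hrel, hc'⟩ := List.isChain_cons_cons.mp hc
    have ihy := ih y (fun v hv => hm v (List.mem_cons_of_mem _ hv)) hc'
    have hmy : m (g y) ≤ N := hm y (by simp)
    simp only [List.map_cons] at ihy ⊢
    have hgle : chg (g x :: g y :: t.map g) ≤ chg (g y :: t.map g) + 1 := chg_cons_le _ _ _
    by_cases hf : f x = f y
    · rw [chg_cons_cons_eq hf]
      rcases hrel hf with hg | hlt
      · rw [chg_cons_cons_eq hg, hg]; exact ihy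
      · omega
    · rw [chg_cons_cons_ne hf]
      have hexp : (chg (f y :: t.map f) + 1) * (N + 1)
          = chg (f y :: t.map f) * (N + 1) + (N + 1) := by ring
      omega

end DstFacts

/-- A topology: a finite nonempty directed graph with no self-loops. -/
structure Topo where
  V : Type
  fintypeV : Fintype V
  decEqV : DecidableEq V
  nonemptyV : Nonempty V
  E : V → V → Prop
  no_self_loops : ∀ v, ¬ E v v

attribute [instance] Topo.fintypeV Topo.decEqV Topo.nonemptyV

/-- `Mark k d`: the type of `d`-th markings (independent of the topology). -/
def Mark (k : ℕ) : ℕ → Type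
  | 0 => Finset (Fin k)
  | d + 1 => Set (List (Mark k d))

def Mark.toSet {k d : ℕ} (m : Mark k (d + 1)) : Set (List (Mark k d)) := m

/-- The labeling `Λ`: `Λ (g i) = {i}` and `Λ v = ∅` for unmarked `v`
(for injective `g`). -/
def lab {k : ℕ} (G : Topo) (g : Fin k → G.V) (v : G.V) : Finset (Fin k) :=
  Finset.univ.filter fun i => g i = v

/-- `InX G g v π`: `π` is a directed path starting at `v`, ending at a marked
vertex, with all non-final vertices unmarked.  (The set `X(v)` of the paper.) -/
def InX {k : ℕ} (G : Topo) (g : Fin k → G.V) (v : G.V) (π : List G.V) : Prop :=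
  π ≠ [] ∧ π.head? = some v ∧ List.Chain' G.E π ∧
    (∀ u ∈ π.dropLast, u ∉ Set.range g) ∧
    ∃ w ∈ Set.range g, π.getLast? = some w

/-- The `d`-th marking `μ_d`. -/
noncomputable def mu {k : ℕ} (G : Topo) (g : Fin k → G.V) : (d : ℕ) → G.V → Mark k d
  | 0, v => lab G g v
  | d + 1, v => { s : List (Mark k d) | ∃ π : List G.V, InX G g v π ∧ s = dst (π.map (mu G g d)) }

section Graph

variable {k : ℕ} {G : Topo} {g : Fin k → G.V}

lemma toSet_inj {d : ℕ} {m m' : Mark k (d+1)} (h : Mark.toSet m = Mark.toSet m') : m = m' := h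

lemma mem_mu_succ {d : ℕ} {v : G.V} {s : List (Mark k d)} :
    s ∈ Mark.toSet (mu G g (d+1) v) ↔ ∃ π, InX G g v π ∧ s = dst (π.map (mu G g d)) := by
  rw [mu]; exact Iff.rfl

lemma lab_unmarked {v : G.V} (hv : v ∉ Set.range g) : lab G g v = ∅ := by
  ext i
  simp only [lab, Finset.mem_filter, Finset.mem_univ, true_and, Finset.notMem_empty, iff_false]
  exact fun h => hv ⟨i, h⟩

lemma head_of_inX {v : G.V} {π : List G.V} (hπ : InX G g v π) : ∃ π', π = v :: π' := by
  obtain ⟨hne, hhead, -⟩ := hπ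
  cases π with
  | nil => exact absurd rfl hne
  | cons x t =>
    have : x = v := by simpa using hhead
    exact ⟨t, by rw [this]⟩

lemma inX_cons {u w : G.V} {π : List G.V} (hu : u ∉ Set.range g) (he : G.E u w)
    (hπ : InX G g w π) : InX G g u (u :: π) := by
  obtain ⟨hne, hhead, hchain, hdrop, hlast⟩ := hπ
  obtain ⟨π', rfl⟩ : ∃ π', π = w :: π' := by
    cases π with
    | nil => exact absurd rfl hne
    | cons x t => exact ⟨t, by simpa using hhead⟩
  refine ⟨by simp, by simp, ?_, ?_, ?_⟩
  · exact List.isChain_cons_cons.mpr ⟨he, hchain⟩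
  · intro z hz
    rw [List.dropLast_cons₂] at hz
    rcases List.mem_cons.mp hz with rfl | hz
    · exact hu
    · exact hdrop z hz
  · obtain ⟨m, hm, hl⟩ := hlast
    exact ⟨m, hm, by rw [List.getLast?_cons_cons]; exact hl⟩

lemma mu_shrink {d : ℕ} {u w : G.V} (hu : u ∉ Set.range g) (he : G.E u w)
    (hmu : mu G g d u = mu G g d w) :
    Mark.toSet (mu G g (d+1) w) ⊆ Mark.toSet (mu G g (d+1) u) := by
  intro s hs
  obtain ⟨π, hπ, rfl⟩ := mem_mu_succ.mp hs
  refine mem_mu_succ.mpr ⟨u :: π, inX_cons hu he hπ, ?_⟩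
  obtain ⟨π', rfl⟩ := head_of_inX hπ
  simp only [List.map_cons]
  rw [hmu]
  exact (dst_cons_cons_eq rfl _).symm

end Graph

section Main

variable {k : ℕ}

lemma chainR {G : Topo} {g : Fin k → G.V} (d : ℕ)
    (hfin : ∀ v : G.V, (Mark.toSet (mu G g (d+1) v)).Finite) :
    ∀ π : List G.V, List.Chain' G.E π → (∀ u ∈ π.dropLast, u ∉ Set.range g) →
    List.Chain' (fun u w => mu G g d u = mu G g d w →
      mu G g (d+1) u = mu G g (d+1) w ∨
      (Mark.toSet (mu G g (d+1) w)).ncard < (Mark.toSet (mu G g (d+1) u)).ncard) π := by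
  intro π
  induction π with
  | nil => intro _ _; exact List.isChain_nil
  | cons x t ih =>
    intro hchain hdrop
    cases t with
    | nil => exact List.isChain_singleton _
    | cons y t' =>
      obtain ⟨hxy, hchain'⟩ := List.isChain_cons_cons.mp hchain
      have hx : x ∉ Set.range g :=
        hdrop x (by rw [List.dropLast_cons₂]; exact List.mem_cons_self)
      refine List.isChain_cons_cons.mpr ⟨?_, ih hchain'
        (fun u hu => hdrop u (by rw [List.dropLast_cons₂]; exact List.mem_cons_of_mem _ hu))⟩
      intro hmu
      have hsubm := mu_shrink hx hxy hmu
      by_cases heq : mu G g (d+1) x = mu G g (d+1) y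
      · exact Or.inl heq
      · refine Or.inr (Set.ncard_lt_ncard
          (hsubm.ssubset_of_ne (fun h => heq (toSet_inj h).symm)) (hfin x))

lemma key (k : ℕ) : ∀ d : ℕ, ∃ (F : Finset (Mark k d)) (B : ℕ),
    ∀ (G : Topo) (g : Fin k → G.V),
      (∀ v, mu G g d v ∈ F) ∧
      (∀ (v : G.V) (π : List G.V), InX G g v π → (dst (π.map (mu G g d))).length ≤ B) := by
  intro d
  induction d with
  | zero =>
    haveI : Fintype (Mark k 0) := inferInstanceAs (Fintype (Finset (Fin k)))
    refine ⟨Finset.univ, 2, fun G g => ⟨fun v => Finset.mem_univ _, fun v π hπ => ?_⟩⟩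
    apply dst_len_le_two (show Mark k 0 from (∅ : Finset (Fin k)))
    intro x hx
    rw [← List.map_dropLast] at hx
    obtain ⟨u, hu, rfl⟩ := List.mem_map.mp hx
    exact lab_unmarked (hπ.2.2.2.1 u hu)
  | succ d ih =>
    classical
    obtain ⟨F, B, hFB⟩ := ih
    set S : Set (List (Mark k d)) := {l | (∀ x ∈ l, x ∈ F) ∧ l.length ≤ B} with hS
    have hSfin : S.Finite := by
      have h1 : S ⊆ (fun l : List {x : Mark k d // x ∈ F} => l.map Subtype.val) ''
          {l | l.length ≤ B} := by
        rintro l ⟨hmem, hlen⟩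
        refine ⟨l.pmap (fun x h => ⟨x, h⟩) hmem, ?_, ?_⟩
        · simpa using hlen
        · simp [List.map_pmap]
      exact ((List.finite_length_le _ B).image _).subset h1
    have hsub : ∀ (G : Topo) (g : Fin k → G.V) (v : G.V),
        Mark.toSet (mu G g (d+1) v) ⊆ S := by
      intro G g v s hs
      obtain ⟨π, hπ, rfl⟩ := mem_mu_succ.mp hs
      constructor
      · intro x hx
        obtain ⟨u, -, rfl⟩ := List.mem_map.mp (mem_of_mem_dst hx)
        exact (hFB G g).1 u
      · exact (hFB G g).2 v π hπ
    have hfin : ∀ (G : Topo) (g : Fin k → G.V) (v : G.V),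
        (Mark.toSet (mu G g (d+1) v)).Finite :=
      fun G g v => hSfin.subset (hsub G g v)
    refine ⟨hSfin.toFinset.powerset.image
      (fun t : Finset (List (Mark k d)) => (↑t : Set (List (Mark k d)))),
      B * (S.ncard + 1), fun G g => ⟨fun v => ?_, fun v π hπ => ?_⟩⟩
    · have hmemp : (hfin G g v).toFinset ∈ hSfin.toFinset.powerset := by
        rw [Finset.mem_powerset, Set.Finite.toFinset_subset_toFinset]
        exact hsub G g v
      exact Finset.mem_image.mpr ⟨(hfin G g v).toFinset, hmemp, (hfin G g v).coe_toFinset⟩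
    · obtain ⟨π', rfl⟩ := head_of_inX hπ
      have hm : ∀ u ∈ v :: π', (Mark.toSet (mu G g (d+1) u)).ncard ≤ S.ncard :=
        fun u _ => Set.ncard_le_ncard (hsub G g u) hSfin
      have hcomb := comb (mu G g d) (mu G g (d+1)) (fun mk => (Mark.toSet mk).ncard)
        S.ncard π' v hm (chainR d (hfin G g) _ hπ.2.2.1 hπ.2.2.2.1)
      have hB : (dst ((v :: π').map (mu G g d))).length ≤ B := (hFB G g).2 v _ hπ
      rw [List.map_cons, length_dst] at hB ⊢
      rw [List.map_cons] at hcomb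
      have hmv : (Mark.toSet (mu G g (d+1) v)).ncard ≤ S.ncard := hm v (by simp)
      have hexp : (chg (mu G g d v :: π'.map (mu G g d)) + 1) * (S.ncard + 1) ≤
          B * (S.ncard + 1) := Nat.mul_le_mul_right _ hB
      have hcomb' : chg (mu G g (d+1) v :: π'.map (mu G g (d+1))) ≤
          chg (mu G g d v :: π'.map (mu G g d)) * (S.ncard + 1) +
            (Mark.toSet (mu G g (d+1) v)).ncard := by
        simpa using hcomb
      have hexp2 : (chg (mu G g d v :: π'.map (mu G g d)) + 1) * (S.ncard + 1) =
          chg (mu G g d v :: π'.map (mu G g d)) * (S.ncard + 1) + S.ncard + 1 := by ring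
      linarith [hcomb', hmv, hexp, hexp2]

end Main

/-- Finiteness of markings: for every `k ≥ 1` and `d` there is a
finite set `F ⊆ Mark k d` containing all markings `μ_d(v)` over all topologies,
marked tuples and vertices. -/
theorem stmt3 (k d : ℕ) (hk : 1 ≤ k) :
    ∃ F : Finset (Mark k d), ∀ (G : Topo) (g : Fin k → G.V),
      Function.Injective g → ∀ v : G.V, mu G g d v ∈ F := by
  obtain ⟨F, B, h⟩ := key k d
  exact ⟨F, fun G g _ v => (h G g).1 v⟩
end

section
/- (The token itinerary is a walk.) Let P be a process template, G a topology with initial vertex x, and s₀ … s_T a finite run of P^G with holder itinerary h₀ … h_T (for each t, h_t is a vertex with tok(s_t(h_t))). Then h₀ = x, and for every t < T either h_{t+1} = h_t or (h_t, h_{t+1}) ∈ E; consequently List.destutter (· ≠ ·) [h₀, …, h_T] is a walk in G from x. -/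
/-- Actions of a process: internal actions from `A = Σint`, plus `snd`, `rcv`. -/
inductive Act (A : Type) where
  | int : A → Act A
  | snd : Act A
  | rcv : Act A

/-- A process template `P = (Q, δ, tok, ιt, ιn)`.  The field `alternation`
encodes that every infinite action-labeled path of `P` lies in
`(Σint* snd Σint* rcv)^ω ∪ (Σint* rcv Σint* snd)^ω`: every infinite path has
infinitely many non-internal actions, between any two `snd`s there is a `rcv`,
and between any two `rcv`s there is a `snd`. -/
structure ProcTemplate (A : Type) where
  Q : Type
  fintypeQ : Fintype Q
  decEqQ : DecidableEq Q
  tok : Q → Prop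
  iotaT : Q
  iotaN : Q
  tok_iotaT : tok iotaT
  not_tok_iotaN : ¬ tok iotaN
  δ : Q → Act A → Q → Prop
  snd_tok : ∀ {q q'}, δ q Act.snd q' → tok q ∧ ¬ tok q'
  rcv_tok : ∀ {q q'}, δ q Act.rcv q' → ¬ tok q ∧ tok q'
  int_tok : ∀ {q a q'}, δ q (Act.int a) q' → (tok q ↔ tok q')
  total : ∀ q, ∃ σ q', δ q σ q'
  alternation : ∀ (q : ℕ → Q) (a : ℕ → Act A),
    (∀ t, δ (q t) (a t) (q (t + 1))) →
      (∀ t, ∃ t', t ≤ t' ∧ (a t' = Act.snd ∨ a t' = Act.rcv)) ∧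
      (∀ t₁ t₂, t₁ < t₂ → a t₁ = Act.snd → a t₂ = Act.snd →
        ∃ t, t₁ < t ∧ t < t₂ ∧ a t = Act.rcv) ∧
      (∀ t₁ t₂, t₁ < t₂ → a t₁ = Act.rcv → a t₂ = Act.rcv →
        ∃ t, t₁ < t ∧ t < t₂ ∧ a t = Act.snd)

attribute [instance] ProcTemplate.fintypeQ ProcTemplate.decEqQ

/-- The initial global state of `P^G` with initial vertex `x`. -/
def gInit {A : Type} (P : ProcTemplate A) (G : Topo) (x : G.V) : G.V → P.Q :=
  fun v => if v = x then P.iotaT else P.iotaN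

/-- Internal transitions of `P^G`: one process moves via an internal action. -/
def IntTrans {A : Type} (P : ProcTemplate A) (G : Topo) (s s' : G.V → P.Q) : Prop :=
  ∃ v a, P.δ (s v) (Act.int a) (s' v) ∧ ∀ w, w ≠ v → s' w = s w

/-- Token-passing transitions of `P^G`: a process sends the token to another
along an edge of `G`. -/
def TokTrans {A : Type} (P : ProcTemplate A) (G : Topo) (s s' : G.V → P.Q) : Prop :=
  ∃ v w, G.E v w ∧ P.δ (s v) Act.snd (s' v) ∧ P.δ (s w) Act.rcv (s' w) ∧
    ∀ u, u ≠ v → u ≠ w → s' u = s u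

/-- Global transitions of `P^G`. -/
def GStep {A : Type} (P : ProcTemplate A) (G : Topo) (s s' : G.V → P.Q) : Prop :=
  IntTrans P G s s' ∨ TokTrans P G s s'

/-- A finite run of `P^G` (as a nonempty list of global states starting at the
initial state, consecutive states related by transitions). -/
def IsFinRun {A : Type} (P : ProcTemplate A) (G : Topo) (x : G.V)
    (ρ : List (G.V → P.Q)) : Prop :=
  ρ ≠ [] ∧ ρ.head? = some (gInit P G x) ∧ List.Chain' (GStep P G) ρ

/-- A walk in `G` from `x`: a nonempty list of vertices starting at `x` with an
edge between consecutive entries. -/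
def IsWalkFrom (G : Topo) (x : G.V) (w : List G.V) : Prop :=
  w ≠ [] ∧ w.head? = some x ∧ List.Chain' G.E w

/-- The `ḡ`-projection trace of a finite run: the list of `k`-tuples of local
states of the processes at the marked vertices. -/
def projTrace {A : Type} {k : ℕ} (P : ProcTemplate A) (G : Topo)
    (g : Fin k → G.V) (ρ : List (G.V → P.Q)) : List (Fin k → P.Q) :=
  ρ.map fun s i => s (g i)

/-- Uniqueness of the token holder. -/
def Uq {A : Type} (P : ProcTemplate A) (G : Topo) (s : G.V → P.Q) : Prop :=
  ∀ u u', P.tok (s u) → P.tok (s u') → u = u'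

lemma step_lemma {A : Type} (P : ProcTemplate A) (G : Topo) {s s' : G.V → P.Q}
    (hs : GStep P G s s') (hu : Uq P G s) :
    Uq P G s' ∧ ∀ v v', P.tok (s v) → P.tok (s' v') → v' = v ∨ G.E v v' := by
  rcases hs with ⟨v, a, hδ, hoth⟩ | ⟨v, w, hE, hsnd, hrcv, hoth⟩
  · have heq : ∀ u, P.tok (s' u) ↔ P.tok (s u) := by
      intro u
      by_cases huv : u = v
      · subst huv; exact (P.int_tok hδ).symm
      · rw [hoth u huv]
    refine ⟨fun u u' h1 h2 => hu u u' ((heq u).mp h1) ((heq u').mp h2), ?_⟩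
    intro v₁ v' h1 h2
    exact Or.inl (hu v' v₁ ((heq v').mp h2) h1)
  · have hv : P.tok (s v) := (P.snd_tok hsnd).1
    have hnv' : ¬ P.tok (s' v) := (P.snd_tok hsnd).2
    have hw' : P.tok (s' w) := (P.rcv_tok hrcv).2
    have claim : ∀ u, P.tok (s' u) → u = w := by
      intro u hu'
      by_cases h1 : u = v
      · exact absurd (h1 ▸ hu') hnv'
      by_cases h2 : u = w
      · exact h2
      · rw [hoth u h1 h2] at hu'
        exact absurd (hu u v hu' hv) h1
    refine ⟨fun u u' h1 h2 => (claim u h1).trans (claim u' h2).symm, ?_⟩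
    intro v₁ v' h1 h2
    right
    rw [claim v' h2, hu v₁ v h1 hv]
    exact hE

lemma chain_aux {A : Type} (P : ProcTemplate A) (G : Topo) :
    ∀ (ρ : List (G.V → P.Q)) (h : List G.V),
      List.Forall₂ (fun s v => P.tok (s v)) ρ h →
      List.Chain' (GStep P G) ρ →
      (∀ s, ρ.head? = some s → Uq P G s) →
      List.Chain' (fun a b => a = b ∨ G.E a b) h := by
  intro ρ h hf
  induction hf with
  | nil => intro _ _; exact List.isChain_nil
  | @cons s v ρ' h' hsv htail ih =>
    intro hc hu
    cases htail with
    | nil => exact List.isChain_singleton _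
    | @cons s' v' ρ'' h'' hsv' htail' =>
      have hstep : GStep P G s s' := (List.isChain_cons_cons.mp hc).1
      have hus : Uq P G s := hu s rfl
      obtain ⟨hus', hrel⟩ := step_lemma P G hstep hus
      refine List.isChain_cons_cons.mpr ⟨?_, ?_⟩
      · rcases hrel v v' hsv hsv' with h1 | h1
        · exact Or.inl h1.symm
        · exact Or.inr h1
      · exact ih (List.isChain_cons_cons.mp hc).2
          (fun s₁ hs₁ => by rw [← Option.some_inj.mp hs₁]; exact hus')

lemma destutter'_head {α : Type} (R : α → α → Prop) [DecidableRel R] :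
    ∀ (l : List α) (a : α), (List.destutter' R a l).head? = some a := by
  intro l
  induction l with
  | nil => intro a; rfl
  | cons b l ih =>
    intro a
    rw [List.destutter'_cons]
    split
    · rfl
    · exact ih a

lemma chain'_destutter {α : Type} (E : α → α → Prop) (l : List α)
    (hc : List.Chain' (fun a b => a = b ∨ E a b) l) :
    List.Chain' E (dst l) := by
  cases l with
  | nil => exact List.isChain_nil
  | cons a l =>
    show List.Chain' E (@List.destutter' α (· ≠ ·) (fun _ _ => Classical.dec _) a l)
    induction l generalizing a with
    | nil => exact List.isChain_singleton _
    | cons b l ih =>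
      rw [List.destutter'_cons]
      have h1 : a = b ∨ E a b := (List.isChain_cons_cons.mp hc).1
      have h2 : List.Chain' (fun a b => a = b ∨ E a b) (b :: l) :=
        (List.isChain_cons_cons.mp hc).2
      split
      · next hne =>
        have hE : E a b := h1.resolve_left hne
        refine List.isChain_cons.mpr ⟨?_, ih b h2⟩
        intro y hy
        rw [@destutter'_head _ (· ≠ ·) (fun _ _ => Classical.dec _) l b] at hy
        rw [← Option.some_inj.mp hy]
        exact hE
      · next hne =>
        have hab : a = b := not_not.mp hne
        subst hab
        exact ih a h2

/-- the token itinerary is a walk: if `h` is a holder itinerary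
of a finite run (pointwise, `h t` holds the token at time `t`), then `h` starts
at `x`, consecutive holders are equal or joined by an edge, and the
destuttering of `h` is a walk in `G` from `x`. -/
theorem stmt14 {A : Type} [Fintype A] [Nonempty A]
    (P : ProcTemplate A) (G : Topo) (x : G.V)
    (ρ : List (G.V → P.Q)) (hρ : IsFinRun P G x ρ)
    (h : List G.V) (hh : List.Forall₂ (fun s v => P.tok (s v)) ρ h) :
    h.head? = some x ∧
    List.Chain' (fun a b => a = b ∨ G.E a b) h ∧
    IsWalkFrom G x (dst h) := by
  obtain ⟨hne, hhead, hchain⟩ := hρ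
  -- the initial state has a unique token holder, namely x
  have huq : Uq P G (gInit P G x) := by
    intro u u' h1 h2
    have hx : ∀ w, P.tok (gInit P G x w) → w = x := by
      intro w hw
      by_contra hwx
      simp only [gInit, if_neg hwx] at hw
      exact P.not_tok_iotaN hw
    rw [hx u h1, hx u' h2]
  -- decompose ρ and h
  cases hh with
  | nil => exact absurd rfl hne
  | @cons s₀ v₀ ρ' h' h0 htail =>
    have hs₀ : s₀ = gInit P G x := Option.some_inj.mp hhead
    subst hs₀
    have hv₀ : v₀ = x := by
      by_contra hvx
      simp only [gInit, if_neg hvx] at h0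
      exact P.not_tok_iotaN h0
    subst hv₀
    have hch : List.Chain' (fun a b => a = b ∨ G.E a b) (v₀ :: h') := by
      refine chain_aux P G _ _ (List.Forall₂.cons h0 htail) hchain ?_
      intro s hs
      rw [← Option.some_inj.mp hs]
      exact huq
    refine ⟨rfl, hch, ?_, ?_, ?_⟩
    · show (@List.destutter' _ (· ≠ ·) (fun _ _ => Classical.dec _) v₀ h') ≠ []
      exact @List.destutter'_ne_nil _ h' (· ≠ ·) (fun _ _ => Classical.dec _) v₀
    · show (@List.destutter' _ (· ≠ ·) (fun _ _ => Classical.dec _) v₀ h').head? = some v₀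
      exact @destutter'_head _ (· ≠ ·) (fun _ _ => Classical.dec _) h' v₀
    · exact chain'_destutter G.E (v₀ :: h') hch
end
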